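/- arXiv:2105.01161 — 2 statements merged into one kernel-verified Lean document; each statement's English description precedes it below -/
import Mathlib

section
/- Let q,k ≥ 1 and let F ⊆ {f : [q]^k → {0,1}} be finite and nonempty. Suppose F weakly supports one-wise independence: there exists a nonempty F' ⊆ F with ρ(F') = ρ(F) such that every f ∈ F' supports one-wise independence, i.e., there is a probability distribution supported on f^{−1}(1) ⊆ [q]^k each of whose k coordinate marginals is uniform on [q]. Then there exist one-wise independent distributions D_Y ∈ S_1^Y(F) and D_N ∈ S_{ρ(F)}^N(F) with μ(D_Y) = μ(D_N). -/
open scoped Classical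
open Finset

/-- A constraint function on `k` variables over the alphabet `[q]`. -/
abbrev CFun (q k : ℕ) := (Fin k → Fin q) → Bool

/-- `D` is a probability distribution on the finite type `Ω`. -/
def IsDist {Ω : Type*} [Fintype Ω] (D : Ω → ℝ) : Prop :=
  (∀ x, 0 ≤ D x) ∧ ∑ x, D x = 1

/-- The value `C(f,a)(b)` of the constraint `(f,a)` on the assignment
`b = (b_{i,σ})` to the `k × q` variables. -/
def cVal {q k : ℕ} (f : CFun q k) (a : Fin k → Fin q) (b : Fin k → Fin q → Fin q) : ℝ :=
  if f (fun i => b i (a i)) then 1 else 0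

/-- The planted assignment `𝕀` with `𝕀_{i,σ} = σ`. -/
def planted (q k : ℕ) : Fin k → Fin q → Fin q := fun _ σ => σ

/-- The set `S_γ^Y(F)` of YES distributions. -/
noncomputable def SY {q k : ℕ} (F : Finset (CFun q k)) (γ : ℝ) :
    Set ((↥F × (Fin k → Fin q)) → ℝ) :=
  {D | IsDist D ∧
    γ ≤ ∑ p : ↥F × (Fin k → Fin q), D p * cVal (p.1 : CFun q k) p.2 (planted q k)}

/-- The set `S_β^N(F)` of NO distributions. -/
noncomputable def SN {q k : ℕ} (F : Finset (CFun q k)) (β : ℝ) :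
    Set ((↥F × (Fin k → Fin q)) → ℝ) :=
  {D | IsDist D ∧ ∀ P : Fin q → Fin q → ℝ, (∀ σ, IsDist (P σ)) →
    (∑ p : ↥F × (Fin k → Fin q), D p *
      ∑ b : Fin k → Fin q → Fin q,
        (∏ i, ∏ σ, P σ (b i σ)) * cVal (p.1 : CFun q k) p.2 b) ≤ β}

/-- The marginal vector `μ(D) ∈ ℝ^{|F|·k·q}` of a distribution `D` on `F × [q]^k`. -/
noncomputable def marginal {q k : ℕ} (F : Finset (CFun q k))
    (D : ↥F × (Fin k → Fin q) → ℝ) : ↥F × Fin k × Fin q → ℝ :=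
  fun x => ∑ a : Fin k → Fin q, if a x.2.1 = x.2.2 then D (x.1, a) else 0

/-- The set `K_γ^Y(F)` of marginals of YES distributions. -/
noncomputable def KY {q k : ℕ} (F : Finset (CFun q k)) (γ : ℝ) :
    Set (↥F × Fin k × Fin q → ℝ) :=
  marginal F '' SY F γ

/-- The set `K_β^N(F)` of marginals of NO distributions. -/
noncomputable def KN {q k : ℕ} (F : Finset (CFun q k)) (β : ℝ) :
    Set (↥F × Fin k × Fin q → ℝ) :=
  marginal F '' SN F β

/-- A distribution on `F × [q]^k` is one-wise independent if its marginals are uniform. -/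
def oneWise {q k : ℕ} (F : Finset (CFun q k)) (D : ↥F × (Fin k → Fin q) → ℝ) : Prop :=
  ∀ (f : ↥F) (i : Fin k) (σ σ' : Fin q),
    marginal F D (f, i, σ) = marginal F D (f, i, σ')

/-- `f` supports one-wise independence: some distribution supported on `f⁻¹(1)` has all
coordinate marginals uniform on `[q]`. -/
def supportsOneWise {q k : ℕ} (f : CFun q k) : Prop :=
  ∃ D : (Fin k → Fin q) → ℝ, IsDist D ∧ (∀ a, D a ≠ 0 → f a = true) ∧
    ∀ (i : Fin k) (σ : Fin q), (∑ a : Fin k → Fin q, if a i = σ then D a else 0) = (q : ℝ)⁻¹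

/-- `ρ(F) = min_{D_F ∈ Δ(F)} max_{D ∈ Δ([q])} E_{f∼D_F, a∼D^k}[f(a)]`. -/
noncomputable def rho {q k : ℕ} (F : Finset (CFun q k)) : ℝ :=
  sInf {r | ∃ DF : ↥F → ℝ, IsDist DF ∧
    r = sSup {s | ∃ D : Fin q → ℝ, IsDist D ∧
      s = ∑ f : ↥F, ∑ a : Fin k → Fin q,
        DF f * (∏ i, D (a i)) * (if (f : CFun q k) a then 1 else 0)}}

lemma sum_delta_prod {I X : Type*} [Fintype I] [DecidableEq I] [Fintype X] [DecidableEq X]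
    (g : I → X) (h : (I → X) → ℝ) :
    ∑ c : I → X, (∏ i, if g i = c i then (1:ℝ) else 0) * h c = h g := by
  rw [Finset.sum_eq_single g]
  · simp
  · intro c _ hc
    obtain ⟨i, hi⟩ := Function.ne_iff.mp (Ne.symm hc)
    rw [Finset.prod_eq_zero (Finset.mem_univ i) (by simp [hi]), zero_mul]
  · simp

lemma sum_pi_split {I X : Type*} [Fintype I] [DecidableEq I] [Fintype X]
    (i0 : I) (w : I → X → ℝ) (h : X → ℝ)
    (hw : ∀ j, j ≠ i0 → ∑ x, w j x = 1) :
    ∑ β : I → X, (∏ j, w j (β j)) * h (β i0) = ∑ x, w i0 x * h x := by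
  have key : ∀ β : I → X, (∏ j, w j (β j)) * h (β i0)
      = ∏ j, (if j = i0 then w j (β j) * h (β j) else w j (β j)) := by
    intro β
    rw [← Finset.mul_prod_erase univ (fun j => if j = i0 then w j (β j) * h (β j) else w j (β j))
      (Finset.mem_univ i0),
      ← Finset.mul_prod_erase univ (fun j => w j (β j)) (Finset.mem_univ i0)]
    rw [if_pos rfl]
    have : ∀ j ∈ univ.erase i0, (if j = i0 then w j (β j) * h (β j) else w j (β j)) = w j (β j) := by
      intro j hj
      rw [if_neg (Finset.mem_erase.mp hj).1]
    rw [Finset.prod_congr rfl this]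
    ring
  simp_rw [key]
  rw [← Fintype.piFinset_univ,
    ← Finset.prod_univ_sum (fun _ => univ) (fun j x => if j = i0 then w j x * h x else w j x)]
  rw [Finset.prod_eq_single i0]
  · simp
  · intro j _ hj
    simp only [if_neg hj]
    exact hw j hj
  · simp

noncomputable def cf {q k : ℕ} (f : CFun q k) (D : Fin q → ℝ) : ℝ :=
  ∑ a : Fin k → Fin q, (∏ i, D (a i)) * (if f a then 1 else 0)

/-- the uniform marginal computation -/
lemma unif_marginal {q k : ℕ} [NeZero q] (i : Fin k) (σ : Fin q) :
    ∑ a : Fin k → Fin q, (if a i = σ then ((q:ℝ)^k)⁻¹ else 0) = (q:ℝ)⁻¹ := by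
  have hq : (q:ℝ) ≠ 0 := by exact_mod_cast NeZero.ne q
  have h1 : ∀ a : Fin k → Fin q, (if a i = σ then ((q:ℝ)^k)⁻¹ else 0)
      = (∏ _j : Fin k, (q:ℝ)⁻¹) * (if a i = σ then 1 else 0) := by
    intro a
    rw [Finset.prod_const, Finset.card_univ, Fintype.card_fin, ← inv_pow]
    by_cases h : a i = σ <;> simp [h]
  simp_rw [h1]
  rw [sum_pi_split i (fun _ x => (q:ℝ)⁻¹) (fun x => if x = σ then 1 else 0)
    (fun j _ => by
      rw [Finset.sum_const, Finset.card_univ, Fintype.card_fin, nsmul_eq_mul,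
        mul_inv_cancel₀ hq])]
  simp

/-- Key mixture identity for the NO case. -/
lemma mixture_identity {q k : ℕ} [NeZero q] (f : CFun q k) (P : Fin q → Fin q → ℝ)
    (hP : ∀ σ, IsDist (P σ)) :
    (∑ a : Fin k → Fin q, ((q:ℝ)^k)⁻¹ *
      ∑ b : Fin k → Fin q → Fin q, (∏ i, ∏ σ, P σ (b i σ)) * cVal f a b)
    = cf f (fun τ => (q:ℝ)⁻¹ * ∑ σ, P σ τ) := by
  have hq : (q:ℝ) ≠ 0 := by exact_mod_cast NeZero.ne q
  -- Step B : the inner b-sum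
  have stepB : ∀ (a c : Fin k → Fin q),
      (∑ b : Fin k → Fin q → Fin q, (∏ i, ∏ σ, P σ (b i σ)) *
        (∏ i, if b i (a i) = c i then (1:ℝ) else 0))
      = ∏ i, P (a i) (c i) := by
    intro a c
    have h1 : ∀ b : Fin k → Fin q → Fin q,
        (∏ i, ∏ σ, P σ (b i σ)) * (∏ i, if b i (a i) = c i then (1:ℝ) else 0)
        = ∏ i, ((∏ σ, P σ (b i σ)) * (if b i (a i) = c i then (1:ℝ) else 0)) := by
      intro b; rw [← Finset.prod_mul_distrib]
    simp_rw [h1]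
    rw [← Fintype.piFinset_univ, ← Finset.prod_univ_sum (fun _ => univ)
      (fun i (β : Fin q → Fin q) => (∏ σ, P σ (β σ)) * (if β (a i) = c i then (1:ℝ) else 0))]
    apply Finset.prod_congr rfl
    intro i _
    rw [sum_pi_split (a i) P (fun x => if x = c i then (1:ℝ) else 0)
      (fun j _ => (hP j).2)]
    simp
  -- Step C : averaging over a
  have stepC : ∀ c : Fin k → Fin q,
      (∑ a : Fin k → Fin q, ((q:ℝ)^k)⁻¹ * ∏ i, P (a i) (c i))
      = ∏ i, ((q:ℝ)⁻¹ * ∑ σ, P σ (c i)) := by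
    intro c
    have h1 : ∀ a : Fin k → Fin q, ((q:ℝ)^k)⁻¹ * ∏ i, P (a i) (c i)
        = ∏ i, ((q:ℝ)⁻¹ * P (a i) (c i)) := by
      intro a
      rw [Finset.prod_mul_distrib, Finset.prod_const, Finset.card_univ, Fintype.card_fin,
        ← inv_pow]
    simp_rw [h1]
    rw [← Fintype.piFinset_univ, ← Finset.prod_univ_sum (fun _ => univ)
      (fun i σ => (q:ℝ)⁻¹ * P σ (c i))]
    apply Finset.prod_congr rfl
    intro i _
    rw [← Finset.mul_sum]
  have swap : ∀ a : Fin k → Fin q,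
      (((q:ℝ)^k)⁻¹ * ∑ b : Fin k → Fin q → Fin q, (∏ i, ∏ σ, P σ (b i σ)) *
        ∑ c : Fin k → Fin q, (∏ i, if b i (a i) = c i then (1:ℝ) else 0) * (if f c then 1 else 0))
      = ∑ c : Fin k → Fin q, (if f c then (1:ℝ) else 0) *
          (((q:ℝ)^k)⁻¹ * ∑ b : Fin k → Fin q → Fin q, (∏ i, ∏ σ, P σ (b i σ)) *
            (∏ i, if b i (a i) = c i then (1:ℝ) else 0)) := by
    intro a
    simp only [Finset.mul_sum]
    rw [Finset.sum_comm]
    apply Finset.sum_congr rfl; intro c _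
    apply Finset.sum_congr rfl; intro b _
    ring
  calc ∑ a : Fin k → Fin q, ((q:ℝ)^k)⁻¹ *
        ∑ b : Fin k → Fin q → Fin q, (∏ i, ∏ σ, P σ (b i σ)) * cVal f a b
      = ∑ a : Fin k → Fin q, ((q:ℝ)^k)⁻¹ *
        ∑ b : Fin k → Fin q → Fin q, (∏ i, ∏ σ, P σ (b i σ)) *
          ∑ c : Fin k → Fin q, (∏ i, if b i (a i) = c i then (1:ℝ) else 0) *
            (if f c then 1 else 0) := by
        apply Finset.sum_congr rfl; intro a _
        congr 1
        apply Finset.sum_congr rfl; intro b _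
        congr 1
        exact (sum_delta_prod (fun i => b i (a i)) (fun c => if f c then 1 else 0)).symm
    _ = ∑ a : Fin k → Fin q, ∑ c : Fin k → Fin q, (if f c then (1:ℝ) else 0) *
          (((q:ℝ)^k)⁻¹ * ∑ b : Fin k → Fin q → Fin q, (∏ i, ∏ σ, P σ (b i σ)) *
            (∏ i, if b i (a i) = c i then (1:ℝ) else 0)) := by
        apply Finset.sum_congr rfl; intro a _
        exact swap a
    _ = ∑ a : Fin k → Fin q, ∑ c : Fin k → Fin q, (if f c then (1:ℝ) else 0) *
          (((q:ℝ)^k)⁻¹ * ∏ i, P (a i) (c i)) := by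
        apply Finset.sum_congr rfl; intro a _
        apply Finset.sum_congr rfl; intro c _
        rw [stepB a c]
    _ = ∑ c : Fin k → Fin q, (if f c then (1:ℝ) else 0) *
          ∑ a : Fin k → Fin q, ((q:ℝ)^k)⁻¹ * ∏ i, P (a i) (c i) := by
        rw [Finset.sum_comm]
        apply Finset.sum_congr rfl; intro c _
        rw [Finset.mul_sum]
    _ = ∑ c : Fin k → Fin q, (if f c then (1:ℝ) else 0) * ∏ i, ((q:ℝ)⁻¹ * ∑ σ, P σ (c i)) := by
        apply Finset.sum_congr rfl; intro c _
        rw [stepC]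
    _ = cf f (fun τ => (q:ℝ)⁻¹ * ∑ σ, P σ τ) := by
        unfold cf
        apply Finset.sum_congr rfl; intro c _
        ring
lemma sum_prod_dist {I X : Type*} [Fintype I] [DecidableEq I] [Fintype X]
    (D : X → ℝ) (hD : ∑ x, D x = 1) :
    ∑ a : I → X, (∏ i, D (a i)) = 1 := by
  rw [← Fintype.piFinset_univ, ← Finset.prod_univ_sum (fun _ => univ) (fun _ x => D x)]
  simp [hD]

lemma cf_nonneg {q k : ℕ} (f : CFun q k) {D : Fin q → ℝ} (hD : IsDist D) :
    0 ≤ cf f D := by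
  apply Finset.sum_nonneg
  intro a _
  apply mul_nonneg (Finset.prod_nonneg fun i _ => hD.1 _)
  positivity

lemma cf_le_one {q k : ℕ} (f : CFun q k) {D : Fin q → ℝ} (hD : IsDist D) :
    cf f D ≤ 1 := by
  calc cf f D ≤ ∑ a : Fin k → Fin q, (∏ i, D (a i)) := by
        apply Finset.sum_le_sum
        intro a _
        have h1 : (0:ℝ) ≤ ∏ i, D (a i) := Finset.prod_nonneg fun i _ => hD.1 _
        by_cases h : f a <;> simp [h, h1]
    _ = 1 := sum_prod_dist D hD.2

noncomputable def gval {q k : ℕ} (F' : Finset (CFun q k)) (DF : ↥F' → ℝ) (D : Fin q → ℝ) : ℝ :=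
  ∑ f : ↥F', DF f * cf (f : CFun q k) D

noncomputable def gfun {q k : ℕ} (F' : Finset (CFun q k)) (DF : ↥F' → ℝ) : ℝ :=
  sSup {s | ∃ D, IsDist D ∧ s = gval F' DF D}

lemma rho_eq_inf_gfun {q k : ℕ} (F' : Finset (CFun q k)) :
    (sInf {r | ∃ DF : ↥F' → ℝ, IsDist DF ∧
      r = sSup {s | ∃ D : Fin q → ℝ, IsDist D ∧
        s = ∑ f : ↥F', ∑ a : Fin k → Fin q,
          DF f * (∏ i, D (a i)) * (if (f : CFun q k) a then 1 else 0)}})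
    = sInf {r | ∃ DF : ↥F' → ℝ, IsDist DF ∧ r = gfun F' DF} := by
  congr 1
  ext r
  have : ∀ (DF : ↥F' → ℝ) (D : Fin q → ℝ),
      (∑ f : ↥F', ∑ a : Fin k → Fin q,
        DF f * (∏ i, D (a i)) * (if (f : CFun q k) a then 1 else 0)) = gval F' DF D := by
    intro DF D
    unfold gval cf
    apply Finset.sum_congr rfl
    intro f _
    rw [Finset.mul_sum]
    apply Finset.sum_congr rfl
    intro a _
    ring
  simp only [Set.mem_setOf_eq, gfun, this]

lemma unif_isDist (q : ℕ) [NeZero q] : IsDist (fun _ : Fin q => (q : ℝ)⁻¹) := by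
  constructor
  · intro x; positivity
  · rw [Finset.sum_const, Finset.card_univ, Fintype.card_fin, nsmul_eq_mul,
      mul_inv_cancel₀]
    exact_mod_cast (NeZero.ne q)

lemma gset_nonempty {q k : ℕ} [NeZero q] (F' : Finset (CFun q k)) (DF : ↥F' → ℝ) :
    {s | ∃ D, IsDist D ∧ s = gval F' DF D}.Nonempty :=
  ⟨_, fun _ => (q:ℝ)⁻¹, unif_isDist q, rfl⟩

lemma gset_bddAbove {q k : ℕ} (F' : Finset (CFun q k)) (DF : ↥F' → ℝ) :
    BddAbove {s | ∃ D, IsDist D ∧ s = gval F' DF D} := by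
  refine ⟨∑ f : ↥F', |DF f|, ?_⟩
  rintro s ⟨D, hD, rfl⟩
  unfold gval
  apply Finset.sum_le_sum
  intro f _
  calc DF f * cf (f : CFun q k) D ≤ |DF f * cf (f : CFun q k) D| := le_abs_self _
    _ = |DF f| * |cf (f : CFun q k) D| := abs_mul _ _
    _ ≤ |DF f| * 1 := by
        apply mul_le_mul_of_nonneg_left _ (abs_nonneg _)
        rw [abs_of_nonneg (cf_nonneg _ hD)]
        exact cf_le_one _ hD
    _ = |DF f| := mul_one _

lemma gval_le_gfun {q k : ℕ} (F' : Finset (CFun q k)) (DF : ↥F' → ℝ) {D : Fin q → ℝ}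
    (hD : IsDist D) : gval F' DF D ≤ gfun F' DF :=
  le_csSup (gset_bddAbove F' DF) ⟨D, hD, rfl⟩

lemma gfun_le {q k : ℕ} [NeZero q] (F' : Finset (CFun q k)) (DF1 DF2 : ↥F' → ℝ) :
    gfun F' DF1 ≤ gfun F' DF2 + ∑ f : ↥F', |DF1 f - DF2 f| := by
  apply csSup_le (gset_nonempty F' DF1)
  rintro s ⟨D, hD, rfl⟩
  have h1 : gval F' DF1 D = gval F' DF2 D + ∑ f : ↥F', (DF1 f - DF2 f) * cf (f : CFun q k) D := by
    unfold gval
    rw [← Finset.sum_add_distrib]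
    apply Finset.sum_congr rfl
    intro f _
    ring
  rw [h1]
  apply add_le_add (gval_le_gfun F' DF2 hD)
  apply Finset.sum_le_sum
  intro f _
  calc (DF1 f - DF2 f) * cf (f : CFun q k) D
      ≤ |(DF1 f - DF2 f) * cf (f : CFun q k) D| := le_abs_self _
    _ = |DF1 f - DF2 f| * |cf (f : CFun q k) D| := abs_mul _ _
    _ ≤ |DF1 f - DF2 f| * 1 := by
        apply mul_le_mul_of_nonneg_left _ (abs_nonneg _)
        rw [abs_of_nonneg (cf_nonneg _ hD)]
        exact cf_le_one _ hD
    _ = _ := mul_one _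

lemma gfun_lipschitz {q k : ℕ} [NeZero q] (F' : Finset (CFun q k)) :
    LipschitzWith (Fintype.card ↥F' : NNReal) (gfun F') := by
  apply LipschitzWith.of_dist_le_mul
  intro x y
  have key : ∀ u v : ↥F' → ℝ, gfun F' u - gfun F' v ≤ (Fintype.card ↥F' : ℝ) * dist u v := by
    intro u v
    have := gfun_le F' u v
    have h2 : ∑ f : ↥F', |u f - v f| ≤ (Fintype.card ↥F' : ℝ) * dist u v := by
      calc ∑ f : ↥F', |u f - v f| ≤ ∑ _f : ↥F', dist u v := by
            apply Finset.sum_le_sum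
            intro f _
            rw [← Real.dist_eq]
            exact dist_le_pi_dist u v f
        _ = (Fintype.card ↥F' : ℝ) * dist u v := by
            rw [Finset.sum_const, Finset.card_univ, nsmul_eq_mul]
    linarith
  rw [Real.dist_eq, NNReal.coe_natCast, abs_sub_le_iff]
  exact ⟨key x y, by rw [dist_comm]; exact key y x⟩

lemma unif_pi_isDist {q k : ℕ} [NeZero q] :
    IsDist (fun _ : Fin k → Fin q => ((q:ℝ)^k)⁻¹) := by
  have hq : (q:ℝ) ≠ 0 := by exact_mod_cast NeZero.ne q
  constructor
  · intro a; positivity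
  · have h1 : ((q:ℝ)^k)⁻¹ = ∏ _i : Fin k, (q:ℝ)⁻¹ := by
      rw [Finset.prod_const, Finset.card_univ, Fintype.card_fin, ← inv_pow]
    rw [show (∑ _a : Fin k → Fin q, ((q:ℝ)^k)⁻¹) = ∑ a : Fin k → Fin q, ∏ _i : Fin k, (q:ℝ)⁻¹
      from by rw [h1]]
    exact sum_prod_dist (fun _ : Fin q => (q:ℝ)⁻¹)
      (by rw [Finset.sum_const, Finset.card_univ, Fintype.card_fin, nsmul_eq_mul,
        mul_inv_cancel₀ hq])

lemma exists_min_DF {q k : ℕ} [NeZero q] (F' : Finset (CFun q k)) (hF' : F'.Nonempty) :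
    ∃ DF : ↥F' → ℝ, IsDist DF ∧ ∀ DF2 : ↥F' → ℝ, IsDist DF2 → gfun F' DF ≤ gfun F' DF2 := by
  have hne : Nonempty ↥F' := ⟨⟨hF'.choose, hF'.choose_spec⟩⟩
  have hcard : (0:ℝ) < (Fintype.card ↥F' : ℝ) := by
    exact_mod_cast Fintype.card_pos_iff.mpr hne
  have hunif : IsDist (fun _ : ↥F' => (Fintype.card ↥F' : ℝ)⁻¹) := by
    constructor
    · intro x; positivity
    · rw [Finset.sum_const, Finset.card_univ, nsmul_eq_mul, mul_inv_cancel₀ (ne_of_gt hcard)]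
  have hmem : (fun _ : ↥F' => (Fintype.card ↥F' : ℝ)⁻¹) ∈ stdSimplex ℝ ↥F' := hunif
  obtain ⟨x, hx, hmin⟩ := (isCompact_stdSimplex ℝ ↥F').exists_isMinOn ⟨_, hmem⟩
    ((gfun_lipschitz F').continuous.continuousOn)
  exact ⟨x, hx, fun DF2 hDF2 => isMinOn_iff.mp hmin DF2 hDF2⟩

lemma gfun_le_rho {q k : ℕ} (F' : Finset (CFun q k)) (DF : ↥F' → ℝ) (hDF : IsDist DF)
    (hmin : ∀ DF2 : ↥F' → ℝ, IsDist DF2 → gfun F' DF ≤ gfun F' DF2) :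
    gfun F' DF ≤ rho F' := by
  have h : rho F' = sInf {r | ∃ DF2 : ↥F' → ℝ, IsDist DF2 ∧ r = gfun F' DF2} :=
    rho_eq_inf_gfun F'
  rw [h]
  refine le_csInf ⟨gfun F' DF, DF, hDF, rfl⟩ ?_
  rintro r ⟨DF2, h1, rfl⟩
  exact hmin DF2 h1

/-- Key step in Theorem 2.17 of the paper: if `F` weakly supports one-wise independence,
then there are one-wise independent distributions `D_Y ∈ S_1^Y(F)` and
`D_N ∈ S_{ρ(F)}^N(F)` with matching marginals. -/
theorem weakly_supports_onewise_hard_pair (q k : ℕ) [NeZero q] [NeZero k]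
    (F : Finset (CFun q k)) (hF : F.Nonempty)
    (F' : Finset (CFun q k)) (hsub : F' ⊆ F) (hF' : F'.Nonempty)
    (hrho : rho F' = rho F)
    (how : ∀ f ∈ F', supportsOneWise f) :
    ∃ DY DN : ↥F × (Fin k → Fin q) → ℝ,
      DY ∈ SY F 1 ∧ DN ∈ SN F (rho F) ∧ oneWise F DY ∧ oneWise F DN ∧
      marginal F DY = marginal F DN := by
  classical
  have hq : (q:ℝ) ≠ 0 := by exact_mod_cast NeZero.ne q
  obtain ⟨DFm, hDFm, hmin⟩ := exists_min_DF F' hF'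
  -- package the minimizer as a function on all of `CFun q k`
  obtain ⟨DF0, h0nn, h0z, h0sum, h0min⟩ :
      ∃ DF0 : CFun q k → ℝ, (∀ f, 0 ≤ DF0 f) ∧ (∀ f, f ∉ F' → DF0 f = 0) ∧
        (∑ f : ↥F', DF0 ↑f = 1) ∧
        ∀ D : Fin q → ℝ, IsDist D →
          (∑ f : ↥F', DF0 ↑f * cf (↑f : CFun q k) D) ≤ rho F' := by
    refine ⟨fun f => if h : f ∈ F' then DFm ⟨f, h⟩ else 0, ?_, ?_, ?_, ?_⟩
    · intro f
      by_cases h : f ∈ F'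
      · simp only [dif_pos h]; exact hDFm.1 _
      · simp only [dif_neg h]; exact le_rfl
    · intro f h; simp only [dif_neg h]
    · refine Eq.trans ?_ hDFm.2
      exact Finset.sum_congr rfl (fun f _ => by simp only [dif_pos f.2, Subtype.coe_eta])
    · intro D hD
      refine le_trans (le_of_eq ?_)
        (le_trans (gval_le_gfun F' DFm hD) (gfun_le_rho F' DFm hDFm hmin))
      exact Finset.sum_congr rfl (fun f _ => by simp only [dif_pos f.2, Subtype.coe_eta])
  -- package the one-wise independent distributions for members of `F'`
  obtain ⟨Dd, hDdist, hDsupp, hDmarg⟩ :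
      ∃ Dd : CFun q k → ((Fin k → Fin q) → ℝ), (∀ f, IsDist (Dd f)) ∧
        (∀ f, f ∈ F' → ∀ a, Dd f a ≠ 0 → f a = true) ∧
        (∀ f, f ∈ F' → ∀ (i : Fin k) (σ : Fin q),
          (∑ a : Fin k → Fin q, if a i = σ then Dd f a else 0) = (q:ℝ)⁻¹) := by
    refine ⟨fun f => if h : f ∈ F' then Classical.choose (how f h)
      else fun _ => ((q:ℝ)^k)⁻¹, ?_, ?_, ?_⟩
    · intro f
      by_cases h : f ∈ F'
      · simp only [dif_pos h]; exact (Classical.choose_spec (how f h)).1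
      · simp only [dif_neg h]; exact unif_pi_isDist
    · intro f h a
      simp only [dif_pos h]
      exact (Classical.choose_spec (how f h)).2.1 a
    · intro f h i σ
      simp only [dif_pos h]
      exact (Classical.choose_spec (how f h)).2.2 i σ
  have restrict : ∀ (g : CFun q k → ℝ), (∀ f, f ∉ F' → g f = 0) →
      ∑ f : ↥F, g ↑f = ∑ f : ↥F', g ↑f := by
    intro g hg
    rw [Finset.sum_coe_sort F g, Finset.sum_coe_sort F' g]
    exact (Finset.sum_subset hsub (fun x _ hx => hg x hx)).symm
  have h0sumF : ∑ f : ↥F, DF0 ↑f = 1 := by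
    rw [restrict DF0 h0z]; exact h0sum
  set DY : ↥F × (Fin k → Fin q) → ℝ := fun p => DF0 ↑p.1 * Dd ↑p.1 p.2 with hDYdef
  set DN : ↥F × (Fin k → Fin q) → ℝ := fun p => DF0 ↑p.1 * ((q:ℝ)^k)⁻¹ with hDNdef
  have hDYapp : ∀ p, DY p = DF0 ↑p.1 * Dd ↑p.1 p.2 := fun p => by rw [hDYdef]
  have hDNapp : ∀ p, DN p = DF0 ↑p.1 * ((q:ℝ)^k)⁻¹ := fun p => by rw [hDNdef]
  have hsumY : ∑ p : ↥F × (Fin k → Fin q), DY p = 1 := by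
    rw [Fintype.sum_prod_type]
    calc ∑ f : ↥F, ∑ a : Fin k → Fin q, DY (f, a) = ∑ f : ↥F, DF0 ↑f := by
          apply Finset.sum_congr rfl; intro f _
          calc ∑ a : Fin k → Fin q, DY (f, a)
              = ∑ a : Fin k → Fin q, DF0 ↑f * Dd ↑f a :=
                Finset.sum_congr rfl (fun a _ => hDYapp (f, a))
            _ = DF0 ↑f * ∑ a : Fin k → Fin q, Dd ↑f a := by rw [Finset.mul_sum]
            _ = DF0 ↑f := by rw [(hDdist ↑f).2, mul_one]
      _ = 1 := h0sumF
  have hsumN : ∑ p : ↥F × (Fin k → Fin q), DN p = 1 := by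
    rw [Fintype.sum_prod_type]
    calc ∑ f : ↥F, ∑ a : Fin k → Fin q, DN (f, a) = ∑ f : ↥F, DF0 ↑f := by
          apply Finset.sum_congr rfl; intro f _
          calc ∑ a : Fin k → Fin q, DN (f, a)
              = ∑ _a : Fin k → Fin q, DF0 ↑f * ((q:ℝ)^k)⁻¹ :=
                Finset.sum_congr rfl (fun a _ => hDNapp (f, a))
            _ = DF0 ↑f * ∑ _a : Fin k → Fin q, ((q:ℝ)^k)⁻¹ := by rw [Finset.mul_sum]
            _ = DF0 ↑f := by
                rw [(unif_pi_isDist (q := q) (k := k)).2, mul_one]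
      _ = 1 := h0sumF
  have margY : ∀ (f : ↥F) (i : Fin k) (σ : Fin q),
      marginal F DY (f, i, σ) = DF0 ↑f * (q:ℝ)⁻¹ := by
    intro f i σ
    have h1 : marginal F DY (f, i, σ)
        = ∑ a : Fin k → Fin q, if a i = σ then DY (f, a) else 0 := rfl
    have h2 : ∀ a : Fin k → Fin q, (if a i = σ then DY (f, a) else 0)
        = DF0 ↑f * (if a i = σ then Dd ↑f a else 0) := by
      intro a; by_cases h : a i = σ
      · rw [if_pos h, if_pos h, hDYapp]
      · rw [if_neg h, if_neg h, mul_zero]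
    rw [h1, Finset.sum_congr rfl (fun a _ => h2 a), ← Finset.mul_sum]
    by_cases h : (↑f : CFun q k) ∈ F'
    · rw [hDmarg ↑f h i σ]
    · rw [h0z ↑f h, zero_mul, zero_mul]
  have margN : ∀ (f : ↥F) (i : Fin k) (σ : Fin q),
      marginal F DN (f, i, σ) = DF0 ↑f * (q:ℝ)⁻¹ := by
    intro f i σ
    have h1 : marginal F DN (f, i, σ)
        = ∑ a : Fin k → Fin q, if a i = σ then DN (f, a) else 0 := rfl
    have h2 : ∀ a : Fin k → Fin q, (if a i = σ then DN (f, a) else 0)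
        = DF0 ↑f * (if a i = σ then ((q:ℝ)^k)⁻¹ else 0) := by
      intro a; by_cases h : a i = σ
      · rw [if_pos h, if_pos h, hDNapp]
      · rw [if_neg h, if_neg h, mul_zero]
    rw [h1, Finset.sum_congr rfl (fun a _ => h2 a), ← Finset.mul_sum, unif_marginal i σ]
  refine ⟨DY, DN, ⟨⟨fun p => ?_, hsumY⟩, ?_⟩, ⟨⟨fun p => ?_, hsumN⟩, ?_⟩, ?_, ?_, ?_⟩
  · rw [hDYapp]
    exact mul_nonneg (h0nn _) ((hDdist _).1 _)
  · -- YES value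
    have hval : ∀ p : ↥F × (Fin k → Fin q),
        DY p * cVal (↑p.1) p.2 (planted q k) = DY p := by
      intro p
      by_cases h0 : DY p = 0
      · rw [h0, zero_mul]
      · have hne : DF0 ↑p.1 ≠ 0 ∧ Dd ↑p.1 p.2 ≠ 0 := by
          rw [hDYapp] at h0; exact mul_ne_zero_iff.mp h0
        have hmem : (↑p.1 : CFun q k) ∈ F' := by
          by_contra hc; exact hne.1 (h0z _ hc)
        have htrue : (↑p.1 : CFun q k) p.2 = true := hDsupp _ hmem _ hne.2
        have hc : cVal (↑p.1 : CFun q k) p.2 (planted q k) = 1 := by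
          simp [cVal, planted, htrue]
        rw [hc, mul_one]
    rw [Finset.sum_congr rfl (fun p _ => hval p), hsumY]
  · rw [hDNapp]
    refine mul_nonneg (h0nn _) (by positivity)
  · -- NO value
    intro P hP
    have hPb : IsDist (fun τ : Fin q => (q:ℝ)⁻¹ * ∑ σ, P σ τ) := by
      constructor
      · intro τ
        exact mul_nonneg (by positivity) (Finset.sum_nonneg fun σ _ => (hP σ).1 τ)
      · calc ∑ τ : Fin q, (q:ℝ)⁻¹ * ∑ σ, P σ τ
            = (q:ℝ)⁻¹ * ∑ τ : Fin q, ∑ σ : Fin q, P σ τ := by rw [Finset.mul_sum]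
          _ = (q:ℝ)⁻¹ * ∑ σ : Fin q, ∑ τ : Fin q, P σ τ := by rw [Finset.sum_comm]
          _ = (q:ℝ)⁻¹ * ∑ _σ : Fin q, (1:ℝ) := by
              rw [Finset.sum_congr rfl (fun σ _ => (hP σ).2)]
          _ = 1 := by
              rw [Finset.sum_const, Finset.card_univ, Fintype.card_fin, nsmul_eq_mul,
                mul_one, inv_mul_cancel₀ hq]
    calc ∑ p : ↥F × (Fin k → Fin q), DN p *
          ∑ b : Fin k → Fin q → Fin q, (∏ i, ∏ σ, P σ (b i σ)) * cVal (↑p.1) p.2 b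
        = ∑ f : ↥F, ∑ a : Fin k → Fin q, DN (f, a) *
            ∑ b : Fin k → Fin q → Fin q, (∏ i, ∏ σ, P σ (b i σ)) * cVal (↑f) a b :=
          Fintype.sum_prod_type _
      _ = ∑ f : ↥F, DF0 ↑f * cf (↑f : CFun q k) (fun τ => (q:ℝ)⁻¹ * ∑ σ, P σ τ) := by
          apply Finset.sum_congr rfl; intro f _
          rw [← mixture_identity (↑f : CFun q k) P hP, Finset.mul_sum]
          apply Finset.sum_congr rfl; intro a _
          rw [hDNapp (f, a)]
          ring
      _ = ∑ f : ↥F', DF0 ↑f * cf (↑f : CFun q k) (fun τ => (q:ℝ)⁻¹ * ∑ σ, P σ τ) :=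
          restrict (fun g => DF0 g * cf g (fun τ => (q:ℝ)⁻¹ * ∑ σ, P σ τ))
            (fun g hg => by simp only [h0z g hg, zero_mul])
      _ ≤ rho F' := h0min _ hPb
      _ = rho F := hrho
  · intro f i σ σ'
    rw [margY f i σ, margY f i σ']
  · intro f i σ σ'
    rw [margN f i σ, margN f i σ']
  · funext x
    obtain ⟨f, i, σ⟩ := x
    rw [margY f i σ, margN f i σ]
end

section
/- Let k ≥ 1, let n be a multiple of k, let α ∈ (0, 1/(100k)) with αn a positive integer, and set m = kαn. Let a ∈ [k]^n be an advice vector, let A ⊆ {−1,1}^n be nonempty with indicator function f, and let D be a distribution on {−1,1}^k with E_{b∼D}[b_j] = 0 for every j ∈ [k]. Then E_M[‖p_{M,D,a} − U‖_tvd²] ≤ (2^{2n}/|A|²) · Σ_{ℓ=2}^{kαn} h(ℓ) · Σ_{v∈{0,1}^n : |v|=ℓ} f̂(v)², where the expectation is over M drawn uniformly from the a-respecting partial permutation matrices, U is the uniform distribution on {−1,1}^m, |v| denotes Hamming weight, and h(ℓ) = max_{v∈{0,1}^n : |v|=ℓ} Pr_M[there exists s ∈ {0,1}^m with s ≠ 0,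 Hamming weight of s(i) different from 1 for every i ∈ [αn], and Mᵀs = v]. -/
open scoped Classical

/-- The sign of a Boolean coordinate: `false ↦ 1`, `true ↦ −1` (so that Boolean `xor`
corresponds to multiplication of signs). -/
def sgn (b : Bool) : ℝ := if b then -1 else 1

/-- The row index of the `t`-th coordinate of the `i`-th block of `k` rows. -/
def blk {k a : ℕ} (i : Fin a) (t : Fin k) : Fin (k * a) :=
  ⟨k * i.val + t.val, by
    have ht := t.isLt
    have hi := i.isLt
    have h1 : k * i.val + t.val < k * (i.val + 1) := by
      have : k * (i.val + 1) = k * i.val + k := by ring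
      omega
    exact lt_of_lt_of_le h1 (Nat.mul_le_mul_left k hi)⟩

/-- The `a`-respecting partial permutation matrices (encoded by the injective map sending
each row to the column of its unique 1): `M_{rj} = 1` forces `adv j ≡ r (mod k)`. -/
noncomputable def respMatchings (k c a : ℕ) (adv : Fin (k * c) → Fin k) :
    Finset (Fin (k * a) → Fin (k * c)) :=
  Finset.univ.filter fun π => Function.Injective π ∧
    ∀ r : Fin (k * a), (adv (π r)).val = r.val % k

/-- The posterior distribution `p_{M,D,a}(z) = E_{x ∼ Unif(A)} E_{b ∼ D^{αn}}[1{z = (Mx)⊙b}]`,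
with `{−1,1}` encoded by `Bool` (so that `⊙` is `xor`). -/
noncomputable def postDist {k c a : ℕ} (A : Finset (Fin (k * c) → Bool))
    (D : (Fin k → Bool) → ℝ) (π : Fin (k * a) → Fin (k * c))
    (z : Fin (k * a) → Bool) : ℝ :=
  (A.card : ℝ)⁻¹ * ∑ x ∈ A, ∑ b : Fin (k * a) → Bool,
    (∏ i : Fin a, D (fun t => b (blk i t))) *
      (if z = (fun r => xor (x (π r)) (b r)) then 1 else 0)

/-- The total variation distance of `p` to the uniform distribution on `{−1,1}^{kαn}`. -/
noncomputable def tvdToUnif {m : ℕ} (p : (Fin m → Bool) → ℝ) : ℝ :=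
  (1 / 2) * ∑ z : Fin m → Bool, |p z - ((2 : ℝ) ^ m)⁻¹|

/-- The Fourier coefficient `f̂(v)` of the indicator function of `A ⊆ {−1,1}^n`. -/
noncomputable def fhatCoeff {n : ℕ} (A : Finset (Fin n → Bool)) (v : Fin n → Bool) : ℝ :=
  ((2 : ℝ) ^ n)⁻¹ * ∑ x : Fin n → Bool,
    (if x ∈ A then 1 else 0) * ∏ j, (if v j then sgn (x j) else 1)

/-- The Hamming weight of a 0/1 vector. -/
def wt {n : ℕ} (v : Fin n → Bool) : ℕ := (Finset.univ.filter fun j => v j = true).card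

/-- `h(ℓ)`: the maximum over `v` of Hamming weight `ℓ` of the probability (over a uniform
`a`-respecting `M`) that `v = Mᵀs` for some `s ≠ 0` all of whose `k`-blocks have Hamming
weight different from 1. -/
noncomputable def hprob (k c a : ℕ) (adv : Fin (k * c) → Fin k) (ℓ : ℕ) : ℝ :=
  sSup {x : ℝ | ∃ v : Fin (k * c) → Bool, wt v = ℓ ∧
    x = ((respMatchings k c a adv).card : ℝ)⁻¹ *
      (((respMatchings k c a adv).filter fun π =>
        ∃ s : Fin (k * a) → Bool,
          (∃ r, s r = true) ∧
          (∀ i : Fin a,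
            (Finset.univ.filter fun t : Fin k => s (blk i t) = true).card ≠ 1) ∧
          (∀ j : Fin (k * c),
            (Finset.univ.filter fun r : Fin (k * a) => π r = j ∧ s r = true).card =
              (if v j then 1 else 0))).card : ℝ)}

lemma sgn_mul_self (b : Bool) : sgn b * sgn b = 1 := by cases b <;> simp [sgn]

lemma sgn_xor (u v : Bool) : sgn (xor u v) = sgn u * sgn v := by
  cases u <;> cases v <;> simp [sgn]

lemma abs_sgn (b : Bool) : |sgn b| = 1 := by cases b <;> simp [sgn]

noncomputable def chi {m : ℕ} (s z : Fin m → Bool) : ℝ :=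
  ∏ r, (if s r then sgn (z r) else 1)

lemma sum_prod_bool {ι : Type*} [Fintype ι] [DecidableEq ι] (g : ι → Bool → ℝ) :
    ∑ s : ι → Bool, ∏ i, g i (s i) = ∏ i, (g i true + g i false) := by
  have h : ∀ i : ι, g i true + g i false = ∑ b : Bool, g i b := by
    intro i; rw [Fintype.sum_bool]
  simp_rw [h]
  rw [Finset.prod_univ_sum]
  rw [Fintype.piFinset_univ]

lemma chi_ortho {m : ℕ} (z w : Fin m → Bool) :
    ∑ s : Fin m → Bool, chi s z * chi s w = if z = w then (2:ℝ)^m else 0 := by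
  have h1 : ∀ s : Fin m → Bool, chi s z * chi s w
      = ∏ r, (fun r' (b : Bool) => if b then sgn (z r') * sgn (w r') else 1) r (s r) := by
    intro s
    rw [chi, chi, ← Finset.prod_mul_distrib]
    refine Finset.prod_congr rfl fun r _ => ?_
    by_cases h : s r <;> simp [h]
  rw [Finset.sum_congr rfl fun s _ => h1 s,
    sum_prod_bool (fun r' (b : Bool) => if b then sgn (z r') * sgn (w r') else 1)]
  by_cases hzw : z = w
  · subst hzw
    rw [if_pos rfl]
    simp only [if_pos rfl, if_neg (by simp : ¬ (false = true))]
    simp [sgn_mul_self]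
    norm_num
  · rw [if_neg hzw]
    obtain ⟨r, hr⟩ := Function.ne_iff.1 hzw
    refine Finset.prod_eq_zero (Finset.mem_univ r) ?_
    have : sgn (z r) * sgn (w r) = -1 := by
      revert hr; cases z r <;> cases w r <;> simp [sgn]
    rw [this]; norm_num

lemma parseval {m : ℕ} (q : (Fin m → Bool) → ℝ) :
    ∑ s : Fin m → Bool, (∑ z, q z * chi s z)^2 = 2^m * ∑ z, (q z)^2 := by
  have h1 : ∀ s : Fin m → Bool, (∑ z, q z * chi s z)^2
      = ∑ z, ∑ w, (q z * q w) * (chi s z * chi s w) := by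
    intro s
    rw [sq, Finset.sum_mul_sum]
    refine Finset.sum_congr rfl fun z _ => Finset.sum_congr rfl fun w _ => by ring
  rw [Finset.sum_congr rfl fun s _ => h1 s]
  rw [Finset.sum_comm]
  have h2 : ∀ z : Fin m → Bool, (∑ s : Fin m → Bool, ∑ w, (q z * q w) * (chi s z * chi s w))
      = q z ^ 2 * 2^m := by
    intro z
    rw [Finset.sum_comm]
    have h3 : ∀ w, (∑ s : Fin m → Bool, (q z * q w) * (chi s z * chi s w))
        = if z = w then q z * q w * 2^m else 0 := by
      intro w
      rw [← Finset.mul_sum, chi_ortho]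
      by_cases h : z = w <;> simp [h]
    rw [Finset.sum_congr rfl fun w _ => h3 w]
    simp [Finset.sum_ite_eq, sq]
  rw [Finset.sum_congr rfl fun z _ => h2 z]
  rw [← Finset.sum_mul]
  ring

lemma tvd_sq_le {m : ℕ} (p : (Fin m → Bool) → ℝ) :
    (tvdToUnif p)^2 ≤ (1/4) * 2^m * ∑ z, (p z - ((2:ℝ)^m)⁻¹)^2 := by
  rw [tvdToUnif, mul_pow]
  have hcs := Finset.sum_mul_sq_le_sq_mul_sq Finset.univ
    (fun _ : Fin m → Bool => (1:ℝ)) (fun z => |p z - ((2:ℝ)^m)⁻¹|)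
  simp only [one_mul, one_pow, sq_abs] at hcs
  have hcard : (∑ _z : Fin m → Bool, (1:ℝ)) = 2^m := by
    simp [Finset.card_univ]
  rw [hcard] at hcs
  calc (1/2:ℝ)^2 * (∑ z : Fin m → Bool, |p z - ((2:ℝ)^m)⁻¹|)^2
      ≤ (1/2:ℝ)^2 * ((2:ℝ)^m * ∑ z, (p z - ((2:ℝ)^m)⁻¹)^2) := by
        refine mul_le_mul_of_nonneg_left hcs (by positivity)
    _ = (1/4) * 2^m * ∑ z, (p z - ((2:ℝ)^m)⁻¹)^2 := by ring

def blkEquiv (k a : ℕ) (hk : 0 < k) : (Fin a × Fin k) ≃ Fin (k * a) where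
  toFun := fun p => blk p.1 p.2
  invFun := fun r => (⟨r.val / k, by
      have := r.isLt
      exact Nat.div_lt_of_lt_mul (by omega)⟩,
    ⟨r.val % k, Nat.mod_lt _ hk⟩)
  left_inv := by
    rintro ⟨i, t⟩
    have h1 : (k * i.val + t.val) / k = i.val := by
      rw [Nat.mul_add_div hk, Nat.div_eq_of_lt t.isLt]; omega
    have h2 : (k * i.val + t.val) % k = t.val := by
      rw [Nat.mul_add_mod, Nat.mod_eq_of_lt t.isLt]
    simp only [blk, Prod.mk.injEq]
    constructor <;> ext <;> simp [h1, h2]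
  right_inv := by
    intro r
    simp only [blk]
    ext
    simp [Nat.div_add_mod]

lemma blkEquiv_symm_blk {k a : ℕ} (hk : 0 < k) (i : Fin a) (t : Fin k) :
    (blkEquiv k a hk).symm (blk i t) = (i, t) :=
  (blkEquiv k a hk).symm_apply_apply ⟨i, t⟩

/-- Summing a function of `b : Fin (k*a) → Bool` that factors over blocks. -/

lemma sum_blocks {k a : ℕ} (hk : 0 < k) (G : Fin a → (Fin k → Bool) → ℝ) :
    ∑ b : Fin (k * a) → Bool, ∏ i : Fin a, G i (fun t => b (blk i t))
      = ∏ i : Fin a, ∑ y : Fin k → Bool, G i y := by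
  classical
  let E : (Fin a → Fin k → Bool) ≃ (Fin (k * a) → Bool) :=
    (Equiv.curry (Fin a) (Fin k) Bool).symm.trans
      (Equiv.arrowCongr (blkEquiv k a hk) (Equiv.refl Bool))
  have hE : ∀ (g : Fin a → Fin k → Bool) (i : Fin a) (t : Fin k),
      E g (blk i t) = g i t := by
    intro g i t
    show (Function.uncurry g) ((blkEquiv k a hk).symm (blk i t)) = g i t
    rw [blkEquiv_symm_blk]
    rfl
  rw [← Equiv.sum_comp E (fun b => ∏ i : Fin a, G i (fun t => b (blk i t)))]
  have h1 : ∀ g : Fin a → Fin k → Bool,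
      (∏ i : Fin a, G i (fun t => E g (blk i t))) = ∏ i : Fin a, G i (g i) := by
    intro g
    refine Finset.prod_congr rfl fun i _ => ?_
    congr 1
    funext t
    exact hE g i t
  rw [Finset.sum_congr rfl fun g _ => h1 g]
  rw [Finset.prod_univ_sum]
  rw [Fintype.piFinset_univ]

/-- A product over all rows written as a double product over blocks. -/

lemma prod_blocks {k a : ℕ} (hk : 0 < k) (F : Fin (k * a) → ℝ) :
    ∏ r : Fin (k * a), F r = ∏ i : Fin a, ∏ t : Fin k, F (blk i t) := by
  rw [← Fintype.prod_prod_type (fun p : Fin a × Fin k => F (blk p.1 p.2))]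
  exact (Equiv.prod_comp (blkEquiv k a hk) F).symm

noncomputable def vmap {k c a : ℕ} (π : Fin (k * a) → Fin (k * c))
    (s : Fin (k * a) → Bool) : Fin (k * c) → Bool :=
  fun j => decide (∃ r, π r = j ∧ s r = true)

/-- The per-block factor `β_i(s)`. -/

noncomputable def beta {k a : ℕ} (D : (Fin k → Bool) → ℝ) (s : Fin (k * a) → Bool)
    (i : Fin a) : ℝ :=
  ∑ y : Fin k → Bool, D y * ∏ t, (if s (blk i t) then sgn (y t) else 1)

lemma sum_indicator_chi {m : ℕ} (s y0 : Fin m → Bool) :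
    ∑ z : Fin m → Bool, (if z = y0 then (1:ℝ) else 0) * chi s z = chi s y0 := by
  simp only [ite_mul, one_mul, zero_mul, Finset.sum_ite_eq', Finset.mem_univ, if_true]

lemma chiA_eq {k c a : ℕ} (π : Fin (k * a) → Fin (k * c)) (hπ : Function.Injective π)
    (s : Fin (k * a) → Bool) (x : Fin (k * c) → Bool) :
    (∏ r : Fin (k * a), if s r then sgn (x (π r)) else 1)
      = ∏ j : Fin (k * c), if vmap π s j then sgn (x j) else 1 := by
  rw [← Finset.prod_filter (fun r => s r = true) (fun r => sgn (x (π r)))]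
  rw [← Finset.prod_filter (fun j => vmap π s j = true) (fun j => sgn (x j))]
  refine Finset.prod_bij (fun r _ => π r) ?_ ?_ ?_ ?_
  · intro r hr
    simp only [Finset.mem_filter, Finset.mem_univ, true_and] at hr ⊢
    simp only [vmap, decide_eq_true_eq]
    exact ⟨r, rfl, hr⟩
  · intro r₁ _ r₂ _ h
    exact hπ h
  · intro j hj
    simp only [Finset.mem_filter, Finset.mem_univ, true_and, vmap,
      decide_eq_true_eq] at hj
    obtain ⟨r, hrj, hrs⟩ := hj
    exact ⟨r, by simp [Finset.mem_filter, hrs], hrj⟩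
  · intro r _; rfl

lemma sum_A_chi {k c a : ℕ} (A : Finset (Fin (k * c) → Bool))
    (π : Fin (k * a) → Fin (k * c)) (hπ : Function.Injective π)
    (s : Fin (k * a) → Bool) :
    (∑ x ∈ A, ∏ r : Fin (k * a), if s r then sgn (x (π r)) else 1)
      = 2 ^ (k * c) * fhatCoeff A (vmap π s) := by
  rw [Finset.sum_congr rfl fun x _ => chiA_eq π hπ s x]
  rw [fhatCoeff]
  rw [← mul_assoc, mul_inv_cancel₀ (by positivity), one_mul]
  symm
  simp only [ite_mul, one_mul, zero_mul]
  rw [Finset.sum_ite_mem, Finset.univ_inter]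

lemma sum_W_chi {k a : ℕ} (hk : 0 < k) (D : (Fin k → Bool) → ℝ)
    (s : Fin (k * a) → Bool) :
    ∑ b : Fin (k * a) → Bool, (∏ i : Fin a, D (fun t => b (blk i t))) * chi s b
      = ∏ i : Fin a, beta D s i := by
  have h1 : ∀ b : Fin (k * a) → Bool,
      (∏ i : Fin a, D (fun t => b (blk i t))) * chi s b
        = ∏ i : Fin a, (fun (i : Fin a) (y : Fin k → Bool) =>
            D y * ∏ t, (if s (blk i t) then sgn (y t) else 1)) i
              (fun t => b (blk i t)) := by
    intro b
    rw [chi, prod_blocks hk, ← Finset.prod_mul_distrib]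
  rw [Finset.sum_congr rfl fun b _ => h1 b]
  rw [sum_blocks hk (fun (i : Fin a) (y : Fin k → Bool) =>
    D y * ∏ t, (if s (blk i t) then sgn (y t) else 1))]
  rfl

lemma fourier_postDist {k c a : ℕ} (hk : 0 < k)
    (A : Finset (Fin (k * c) → Bool)) (hA : A.Nonempty)
    (D : (Fin k → Bool) → ℝ)
    (π : Fin (k * a) → Fin (k * c)) (hπ : Function.Injective π)
    (s : Fin (k * a) → Bool) :
    ∑ z : Fin (k * a) → Bool, postDist A D π z * chi s z
      = (A.card : ℝ)⁻¹ * (2 ^ (k * c) * fhatCoeff A (vmap π s))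
          * ∏ i : Fin a, beta D s i := by
  have hchiy : ∀ (x : Fin (k * c) → Bool) (b : Fin (k * a) → Bool),
      chi s (fun r => xor (x (π r)) (b r))
        = (∏ r : Fin (k * a), if s r then sgn (x (π r)) else 1) * chi s b := by
    intro x b
    rw [chi, chi, ← Finset.prod_mul_distrib]
    refine Finset.prod_congr rfl fun r _ => ?_
    by_cases h : s r <;> simp [h, sgn_xor]
  have h0 : ∑ z : Fin (k * a) → Bool, postDist A D π z * chi s z
      = (A.card : ℝ)⁻¹ * ∑ x ∈ A, ∑ b : Fin (k * a) → Bool,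
          (∏ r : Fin (k * a), if s r then sgn (x (π r)) else 1) *
            ((∏ i : Fin a, D (fun t => b (blk i t))) * chi s b) := by
    simp only [postDist, mul_assoc]
    rw [← Finset.mul_sum]
    congr 1
    simp only [Finset.sum_mul]
    rw [Finset.sum_comm]
    refine Finset.sum_congr rfl fun x _ => ?_
    rw [Finset.sum_comm]
    refine Finset.sum_congr rfl fun b _ => ?_
    have he : ∀ z : Fin (k * a) → Bool,
        ((∏ i : Fin a, D (fun t => b (blk i t))) *
            (if z = (fun r => xor (x (π r)) (b r)) then (1:ℝ) else 0)) * chi s z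
        = (∏ i : Fin a, D (fun t => b (blk i t))) *
            ((if z = (fun r => xor (x (π r)) (b r)) then (1:ℝ) else 0) * chi s z) :=
      fun z => by ring
    rw [Finset.sum_congr rfl fun z _ => he z, ← Finset.mul_sum, sum_indicator_chi,
      hchiy]
    ring
  rw [h0]
  have h1 : ∀ x : Fin (k * c) → Bool,
      (∑ b : Fin (k * a) → Bool,
        (∏ r : Fin (k * a), if s r then sgn (x (π r)) else 1) *
          ((∏ i : Fin a, D (fun t => b (blk i t))) * chi s b))
      = (∏ r : Fin (k * a), if s r then sgn (x (π r)) else 1) *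
          ∏ i : Fin a, beta D s i := by
    intro x
    rw [← Finset.mul_sum, sum_W_chi hk]
  rw [Finset.sum_congr rfl fun x _ => h1 x, ← Finset.sum_mul, sum_A_chi A π hπ s]
  ring

lemma abs_prod_ite_sgn {k : ℕ} (P : Fin k → Prop) [DecidablePred P] (y : Fin k → Bool) :
    |∏ t, (if P t then sgn (y t) else 1)| = 1 := by
  rw [Finset.abs_prod]
  refine Finset.prod_eq_one fun t _ => ?_
  by_cases h : P t <;> simp [h, abs_sgn]

lemma abs_beta_le {k a : ℕ} (D : (Fin k → Bool) → ℝ) (hD0 : ∀ b, 0 ≤ D b)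
    (hD1 : ∑ b, D b = 1) (s : Fin (k * a) → Bool) (i : Fin a) :
    |beta D s i| ≤ 1 := by
  rw [beta]
  calc |∑ y : Fin k → Bool, D y * ∏ t, (if s (blk i t) then sgn (y t) else 1)|
      ≤ ∑ y : Fin k → Bool, |D y * ∏ t, (if s (blk i t) then sgn (y t) else 1)| :=
        Finset.abs_sum_le_sum_abs _ _
    _ = ∑ y : Fin k → Bool, D y := by
        refine Finset.sum_congr rfl fun y _ => ?_
        rw [abs_mul, abs_prod_ite_sgn, mul_one, abs_of_nonneg (hD0 y)]
    _ = 1 := hD1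

lemma beta_eq_zero {k a : ℕ} (D : (Fin k → Bool) → ℝ)
    (hmarg : ∀ j : Fin k, ∑ b : Fin k → Bool, D b * sgn (b j) = 0)
    (s : Fin (k * a) → Bool) (i : Fin a)
    (h : (Finset.univ.filter fun t : Fin k => s (blk i t) = true).card = 1) :
    beta D s i = 0 := by
  obtain ⟨t₀, ht₀⟩ := Finset.card_eq_one.1 h
  have hp : ∀ y : Fin k → Bool,
      (∏ t, (if s (blk i t) then sgn (y t) else 1)) = sgn (y t₀) := by
    intro y
    rw [← Finset.prod_filter (fun t => s (blk i t) = true) (fun t => sgn (y t)), ht₀,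
      Finset.prod_singleton]
  rw [beta, Finset.sum_congr rfl fun y _ => by rw [hp y]]
  exact hmarg t₀

lemma prod_beta_sq_le {k a : ℕ} (D : (Fin k → Bool) → ℝ) (hD0 : ∀ b, 0 ≤ D b)
    (hD1 : ∑ b, D b = 1) (s : Fin (k * a) → Bool) :
    (∏ i : Fin a, beta D s i) ^ 2 ≤ 1 := by
  rw [← sq_abs, Finset.abs_prod]
  have h1 : ∏ i : Fin a, |beta D s i| ≤ 1 :=
    Finset.prod_le_one (fun i _ => abs_nonneg _) (fun i _ => abs_beta_le D hD0 hD1 s i)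
  have h0 : (0:ℝ) ≤ ∏ i : Fin a, |beta D s i| :=
    Finset.prod_nonneg fun i _ => abs_nonneg _
  nlinarith

lemma sum_postDist {k c a : ℕ} (hk : 0 < k)
    (A : Finset (Fin (k * c) → Bool)) (hA : A.Nonempty)
    (D : (Fin k → Bool) → ℝ) (hD1 : ∑ b, D b = 1)
    (π : Fin (k * a) → Fin (k * c)) :
    ∑ z : Fin (k * a) → Bool, postDist A D π z = 1 := by
  have hW : ∑ b : Fin (k * a) → Bool, ∏ i : Fin a, D (fun t => b (blk i t)) = 1 := by
    rw [sum_blocks hk (fun (_ : Fin a) (y : Fin k → Bool) => D y)]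
    simp [hD1]
  simp only [postDist]
  rw [← Finset.mul_sum, Finset.sum_comm]
  have h1 : ∀ x ∈ A,
      (∑ z : Fin (k * a) → Bool, ∑ b : Fin (k * a) → Bool,
        (∏ i : Fin a, D (fun t => b (blk i t))) *
          (if z = (fun r => xor (x (π r)) (b r)) then (1:ℝ) else 0)) = 1 := by
    intro x _
    rw [Finset.sum_comm]
    have h2 : ∀ b : Fin (k * a) → Bool,
        (∑ z : Fin (k * a) → Bool,
          (∏ i : Fin a, D (fun t => b (blk i t))) *
            (if z = (fun r => xor (x (π r)) (b r)) then (1:ℝ) else 0))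
          = ∏ i : Fin a, D (fun t => b (blk i t)) := by
      intro b
      rw [← Finset.mul_sum]
      rw [Finset.sum_ite_eq' Finset.univ (fun r => xor (x (π r)) (b r)) (fun _ => (1:ℝ))]
      simp
    rw [Finset.sum_congr rfl fun b _ => h2 b, hW]
  rw [Finset.sum_congr rfl h1, Finset.sum_const, nsmul_eq_mul, mul_one]
  rw [inv_mul_cancel₀]
  have : (0:ℝ) < (A.card : ℝ) := by exact_mod_cast Finset.card_pos.2 hA
  exact this.ne'

lemma sum_chi_eq_zero {m : ℕ} (s : Fin m → Bool) (hs : ∃ r, s r = true) :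
    ∑ z : Fin m → Bool, chi s z = 0 := by
  have h1 : ∀ z : Fin m → Bool, chi s z
      = ∏ r, (fun r' (b : Bool) => if s r' then sgn b else 1) r (z r) := fun z => rfl
  rw [Finset.sum_congr rfl fun z _ => h1 z,
    sum_prod_bool (fun r' (b : Bool) => if s r' then sgn b else 1)]
  obtain ⟨r, hr⟩ := hs
  refine Finset.prod_eq_zero (Finset.mem_univ r) ?_
  simp [hr, sgn]

noncomputable def goodS (k a : ℕ) : Finset (Fin (k * a) → Bool) :=
  Finset.univ.filter fun s => (∃ r, s r = true) ∧
    ∀ i : Fin a, (Finset.univ.filter fun t : Fin k => s (blk i t) = true).card ≠ 1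

lemma per_pi_bound {k c a : ℕ} (hk : 0 < k)
    (A : Finset (Fin (k * c) → Bool)) (hA : A.Nonempty)
    (D : (Fin k → Bool) → ℝ) (hD0 : ∀ b, 0 ≤ D b) (hD1 : ∑ b, D b = 1)
    (hmarg : ∀ j : Fin k, ∑ b : Fin k → Bool, D b * sgn (b j) = 0)
    (π : Fin (k * a) → Fin (k * c)) (hπ : Function.Injective π) :
    (tvdToUnif (postDist A D π)) ^ 2 ≤
      ((2 : ℝ) ^ (2 * (k * c)) / ((A.card : ℝ) ^ 2)) *
        ∑ s ∈ goodS k a, (fhatCoeff A (vmap π s)) ^ 2 := by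
  set p := postDist A D π with hp
  set q : (Fin (k*a) → Bool) → ℝ := fun z => p z - ((2:ℝ)^(k*a))⁻¹ with hq
  -- The Fourier transform of q
  have hqhat : ∀ s : Fin (k*a) → Bool, (∃ r, s r = true) →
      ∑ z, q z * chi s z = ∑ z, p z * chi s z := by
    intro s hs
    simp only [hq, sub_mul, Finset.sum_sub_distrib]
    rw [← Finset.mul_sum, sum_chi_eq_zero s hs, mul_zero, sub_zero]
  have hqhat0 : ∀ s : Fin (k*a) → Bool, ¬ (∃ r, s r = true) →
      ∑ z, q z * chi s z = 0 := by
    intro s hs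
    have hchi1 : ∀ z : Fin (k*a) → Bool, chi s z = 1 := by
      intro z
      refine Finset.prod_eq_one fun r _ => ?_
      have : s r = false := by
        by_contra h
        exact hs ⟨r, by revert h; cases s r <;> simp⟩
      simp [this]
    simp only [hq, hchi1, mul_one, Finset.sum_sub_distrib]
    rw [sum_postDist hk A hA D hD1 π, Finset.sum_const, Finset.card_univ]
    simp [Fintype.card_fun]
  -- bound each Fourier coefficient squared
  have hF : ∀ s : Fin (k*a) → Bool,
      (∑ z, q z * chi s z)^2 ≤
        (if s ∈ goodS k a
          then (2:ℝ) ^ (2 * (k * c)) / ((A.card : ℝ) ^ 2) * (fhatCoeff A (vmap π s))^2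
          else 0) := by
    intro s
    by_cases hs0 : ∃ r, s r = true
    · by_cases hbl : ∀ i : Fin a, (Finset.univ.filter fun t : Fin k => s (blk i t) = true).card ≠ 1
      · have hmem : s ∈ goodS k a := by
          simp only [goodS, Finset.mem_filter, Finset.mem_univ, true_and]
          exact ⟨hs0, hbl⟩
        rw [if_pos hmem, hqhat s hs0, fourier_postDist hk A hA D π hπ s]
        have hb := prod_beta_sq_le D hD0 hD1 s
        have hAc : (0:ℝ) < (A.card : ℝ) := by exact_mod_cast Finset.card_pos.2 hA
        have e1 : ((A.card : ℝ)⁻¹ * (2 ^ (k * c) * fhatCoeff A (vmap π s))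
              * ∏ i : Fin a, beta D s i)^2
            = ((2:ℝ) ^ (2 * (k * c)) / ((A.card : ℝ) ^ 2) * (fhatCoeff A (vmap π s))^2)
                * (∏ i : Fin a, beta D s i)^2 := by
          field_simp
          ring
        rw [e1]
        have e2 : (0:ℝ) ≤ (2:ℝ) ^ (2 * (k * c)) / ((A.card : ℝ) ^ 2)
            * (fhatCoeff A (vmap π s))^2 := by positivity
        nlinarith
      · push_neg at hbl
        obtain ⟨i, hi⟩ := hbl
        have hng : s ∉ goodS k a := by
          simp only [goodS, Finset.mem_filter, Finset.mem_univ, true_and, not_and]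
          intro _
          push_neg
          exact ⟨i, hi⟩
        rw [if_neg hng, hqhat s hs0, fourier_postDist hk A hA D π hπ s]
        rw [Finset.prod_eq_zero (Finset.mem_univ i) (beta_eq_zero D hmarg s i hi)]
        simp
    · have hng : s ∉ goodS k a := by
        simp only [goodS, Finset.mem_filter, Finset.mem_univ, true_and, not_and]
        intro h
        exact absurd h hs0
      rw [if_neg hng, hqhat0 s hs0]
      simp
  -- assemble
  have h1 := tvd_sq_le p
  have h2 := parseval q
  have h3 : ∑ z, (q z)^2 = ((2:ℝ)^(k*a))⁻¹ * ∑ s : Fin (k*a) → Bool, (∑ z, q z * chi s z)^2 := by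
    rw [h2, ← mul_assoc, inv_mul_cancel₀ (by positivity), one_mul]
  have h4 : ∑ s : Fin (k*a) → Bool, (∑ z, q z * chi s z)^2 ≤
      ∑ s ∈ goodS k a, (2:ℝ) ^ (2 * (k * c)) / ((A.card : ℝ) ^ 2)
        * (fhatCoeff A (vmap π s))^2 := by
    calc ∑ s : Fin (k*a) → Bool, (∑ z, q z * chi s z)^2
        ≤ ∑ s : Fin (k*a) → Bool,
            (if s ∈ goodS k a
              then (2:ℝ) ^ (2 * (k * c)) / ((A.card : ℝ) ^ 2) * (fhatCoeff A (vmap π s))^2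
              else 0) := Finset.sum_le_sum fun s _ => hF s
      _ = ∑ s ∈ goodS k a, (2:ℝ) ^ (2 * (k * c)) / ((A.card : ℝ) ^ 2)
            * (fhatCoeff A (vmap π s))^2 := by
          rw [Finset.sum_ite_mem, Finset.univ_inter]
  calc (tvdToUnif p)^2 ≤ (1/4) * 2^(k*a) * ∑ z, (q z)^2 := h1
    _ = (1/4) * ((2:ℝ)^(k*a) * ((2:ℝ)^(k*a))⁻¹) * ∑ s : Fin (k*a) → Bool, (∑ z, q z * chi s z)^2 := by
        rw [h3]; ring
    _ = (1/4) * ∑ s : Fin (k*a) → Bool, (∑ z, q z * chi s z)^2 := by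
        rw [mul_inv_cancel₀ (by positivity : ((2:ℝ)^(k*a)) ≠ 0)]; ring
    _ ≤ ∑ s : Fin (k*a) → Bool, (∑ z, q z * chi s z)^2 := by
        have hnn : (0:ℝ) ≤ ∑ s : Fin (k*a) → Bool, (∑ z, q z * chi s z)^2 :=
          Finset.sum_nonneg fun s _ => sq_nonneg _
        linarith
    _ ≤ ∑ s ∈ goodS k a, (2:ℝ) ^ (2 * (k * c)) / ((A.card : ℝ) ^ 2)
          * (fhatCoeff A (vmap π s))^2 := h4
    _ = ((2 : ℝ) ^ (2 * (k * c)) / ((A.card : ℝ) ^ 2)) *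
          ∑ s ∈ goodS k a, (fhatCoeff A (vmap π s)) ^ 2 := by
        rw [Finset.mul_sum]

lemma vmap_apply {k c a : ℕ} (π : Fin (k * a) → Fin (k * c))
    (hπ : Function.Injective π) (s : Fin (k * a) → Bool) (r : Fin (k * a)) :
    vmap π s (π r) = s r := by
  cases hsr : s r with
  | true =>
    simp only [vmap, decide_eq_true_eq]
    exact ⟨r, rfl, hsr⟩
  | false =>
    simp only [vmap]
    rw [decide_eq_false_iff_not]
    rintro ⟨r', h1, h2⟩
    have := hπ h1
    subst this
    rw [hsr] at h2
    exact Bool.false_ne_true h2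

lemma vmap_inj {k c a : ℕ} (π : Fin (k * a) → Fin (k * c))
    (hπ : Function.Injective π) : Function.Injective (vmap π) := by
  intro s s' h
  funext r
  rw [← vmap_apply π hπ s r, ← vmap_apply π hπ s' r, h]

lemma vmap_count {k c a : ℕ} (π : Fin (k * a) → Fin (k * c))
    (hπ : Function.Injective π) (s : Fin (k * a) → Bool) (v : Fin (k * c) → Bool) :
    (∀ j : Fin (k * c),
        (Finset.univ.filter fun r : Fin (k * a) => π r = j ∧ s r = true).card =
          (if v j then 1 else 0)) ↔ vmap π s = v := by
  constructor
  · intro h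
    funext j
    cases hv : v j with
    | false =>
      have h0 := h j
      rw [hv, if_neg (by simp)] at h0
      rw [Finset.card_eq_zero] at h0
      simp only [vmap]
      rw [decide_eq_false_iff_not]
      rintro ⟨r, h1, h2⟩
      have : r ∈ Finset.univ.filter fun r : Fin (k * a) => π r = j ∧ s r = true := by
        simp [h1, h2]
      rw [h0] at this
      exact absurd this (Finset.notMem_empty r)
    | true =>
      have h0 := h j
      rw [hv, if_pos rfl] at h0
      have hne : (Finset.univ.filter fun r : Fin (k * a) => π r = j ∧ s r = true).Nonempty := by
        rw [← Finset.card_pos, h0]; norm_num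
      obtain ⟨r, hr⟩ := hne
      simp only [Finset.mem_filter, Finset.mem_univ, true_and] at hr
      simp only [vmap, decide_eq_true_eq]
      exact ⟨r, hr⟩
  · rintro rfl
    intro j
    by_cases hex : ∃ r, π r = j ∧ s r = true
    · obtain ⟨r0, hr0j, hr0s⟩ := hex
      have hset : (Finset.univ.filter fun r : Fin (k * a) => π r = j ∧ s r = true) = {r0} := by
        ext r
        simp only [Finset.mem_filter, Finset.mem_univ, true_and, Finset.mem_singleton]
        constructor
        · rintro ⟨h1, _⟩
          exact hπ (h1.trans hr0j.symm)
        · rintro rfl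
          exact ⟨hr0j, hr0s⟩
      rw [hset, Finset.card_singleton]
      have : vmap π s j = true := by
        simp only [vmap, decide_eq_true_eq]; exact ⟨r0, hr0j, hr0s⟩
      rw [this, if_pos rfl]
    · have hset : (Finset.univ.filter fun r : Fin (k * a) => π r = j ∧ s r = true) = ∅ := by
        rw [Finset.filter_eq_empty_iff]
        intro r _
        intro hcon
        exact hex ⟨r, hcon⟩
      rw [hset, Finset.card_empty]
      have : vmap π s j = false := by
        simp only [vmap]
        rw [decide_eq_false_iff_not]
        exact hex
      rw [this, if_neg (by simp)]

lemma wt_vmap {k c a : ℕ} (π : Fin (k * a) → Fin (k * c))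
    (hπ : Function.Injective π) (s : Fin (k * a) → Bool) :
    wt (vmap π s) = wt s := by
  rw [wt, wt]
  symm
  refine Finset.card_bij (fun r _ => π r) ?_ ?_ ?_
  · intro r hr
    simp only [Finset.mem_filter, Finset.mem_univ, true_and] at hr ⊢
    rw [vmap_apply π hπ s r]
    exact hr
  · intro r₁ _ r₂ _ h
    exact hπ h
  · intro j hj
    simp only [Finset.mem_filter, Finset.mem_univ, true_and, vmap,
      decide_eq_true_eq] at hj
    obtain ⟨r, hrj, hrs⟩ := hj
    exact ⟨r, by simp [Finset.mem_filter, hrs], hrj⟩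

lemma two_le_wt_goodS {k a : ℕ} (hk : 0 < k) {s : Fin (k * a) → Bool}
    (hs : s ∈ goodS k a) : 2 ≤ wt s := by
  simp only [goodS, Finset.mem_filter, Finset.mem_univ, true_and] at hs
  obtain ⟨⟨r, hr⟩, hbl⟩ := hs
  set i₀ : Fin a := ((blkEquiv k a hk).symm r).1 with hi₀
  set t₀ : Fin k := ((blkEquiv k a hk).symm r).2 with ht₀
  have hrb : blk i₀ t₀ = r := by
    have := (blkEquiv k a hk).apply_symm_apply r
    rw [hi₀, ht₀]
    exact this
  set B := Finset.univ.filter fun t : Fin k => s (blk i₀ t) = true with hB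
  have ht₀B : t₀ ∈ B := by
    simp only [hB, Finset.mem_filter, Finset.mem_univ, true_and]
    rw [hrb]; exact hr
  have h2 : 2 ≤ B.card := by
    have h1 : 1 ≤ B.card := Finset.card_pos.2 ⟨t₀, ht₀B⟩
    have h3 : B.card ≠ 1 := hbl i₀
    omega
  refine le_trans h2 ?_
  rw [wt]
  refine Finset.card_le_card_of_injOn (fun t => blk i₀ t) ?_ ?_
  · intro t ht
    simp only [hB, Finset.mem_coe, Finset.mem_filter, Finset.mem_univ, true_and] at ht ⊢
    exact ht
  · intro t₁ _ t₂ _ h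
    have : k * i₀.val + t₁.val = k * i₀.val + t₂.val := congrArg Fin.val h
    ext
    omega

lemma wt_le {k a : ℕ} (s : Fin (k * a) → Bool) : wt s ≤ k * a :=
  le_trans (Finset.card_filter_le _ _) (by simp)

def predV {k c a : ℕ} (v : Fin (k * c) → Bool) (π : Fin (k * a) → Fin (k * c)) : Prop :=
  ∃ s : Fin (k * a) → Bool,
    (∃ r, s r = true) ∧
    (∀ i : Fin a,
      (Finset.univ.filter fun t : Fin k => s (blk i t) = true).card ≠ 1) ∧
    (∀ j : Fin (k * c),
      (Finset.univ.filter fun r : Fin (k * a) => π r = j ∧ s r = true).card =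
        (if v j then 1 else 0))

lemma filter_predV_eq {k c a : ℕ} (adv : Fin (k * c) → Fin k) (v : Fin (k * c) → Bool) :
    ((respMatchings k c a adv).filter fun π => predV v π)
      = (respMatchings k c a adv).filter fun π =>
          ∃ s : Fin (k * a) → Bool,
            (∃ r, s r = true) ∧
            (∀ i : Fin a,
              (Finset.univ.filter fun t : Fin k => s (blk i t) = true).card ≠ 1) ∧
            (∀ j : Fin (k * c),
              (Finset.univ.filter fun r : Fin (k * a) => π r = j ∧ s r = true).card =
                (if v j then 1 else 0)) := by
  ext π
  simp only [Finset.mem_filter, predV]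
  exact @Finset.mem_filter _ _ (fun _ => Classical.propDecidable _) _ _

lemma inv_card_filter_le_one {γ : Type*} (S : Finset γ) (p : γ → Prop)
    [DecidablePred p] : (S.card : ℝ)⁻¹ * (((S.filter p).card : ℝ)) ≤ 1 := by
  have hsub : (S.filter p).card ≤ S.card := Finset.card_le_card (Finset.filter_subset _ _)
  by_cases h0 : S.card = 0
  · have h1 : (S.filter p).card = 0 := by omega
    rw [h1]
    norm_num
  · have hpos : (0:ℝ) < (S.card : ℝ) := by exact_mod_cast Nat.pos_of_ne_zero h0
    calc (S.card : ℝ)⁻¹ * (((S.filter p).card : ℝ))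
        ≤ (S.card : ℝ)⁻¹ * (S.card : ℝ) := by
          refine mul_le_mul_of_nonneg_left ?_ (by positivity)
          exact_mod_cast hsub
      _ = 1 := inv_mul_cancel₀ hpos.ne'

lemma hprob_ge {k c a : ℕ} (adv : Fin (k * c) → Fin k) (v : Fin (k * c) → Bool) :
    ((respMatchings k c a adv).card : ℝ)⁻¹ *
      ((((respMatchings k c a adv).filter fun π => predV v π)).card : ℝ)
      ≤ hprob k c a adv (wt v) := by
  rw [filter_predV_eq adv v]
  unfold hprob
  refine le_csSup ⟨1, ?_⟩ ⟨v, rfl, rfl⟩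
  rintro x ⟨v', _, rfl⟩
  exact inv_card_filter_le_one _ _

lemma hprob_nonneg {k c a : ℕ} (adv : Fin (k * c) → Fin k) (ℓ : ℕ) :
    0 ≤ hprob k c a adv ℓ := by
  unfold hprob
  refine Real.sSup_nonneg ?_
  rintro x ⟨v, _, rfl⟩
  positivity

lemma image_vmap_goodS {k c a : ℕ} (π : Fin (k * a) → Fin (k * c))
    (hπ : Function.Injective π) :
    (goodS k a).image (vmap π) = Finset.univ.filter fun v => predV v π := by
  ext v
  simp only [Finset.mem_image, Finset.mem_filter, Finset.mem_univ, true_and]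
  constructor
  · rintro ⟨s, hs, rfl⟩
    simp only [goodS, Finset.mem_filter, Finset.mem_univ, true_and] at hs
    exact ⟨s, hs.1, hs.2, (vmap_count π hπ s (vmap π s)).2 rfl⟩
  · rintro ⟨s, h1, h2, h3⟩
    refine ⟨s, ?_, (vmap_count π hπ s v).1 h3⟩
    simp only [goodS, Finset.mem_filter, Finset.mem_univ, true_and]
    exact ⟨h1, h2⟩

lemma sum_goodS_eq {k c a : ℕ} (A : Finset (Fin (k * c) → Bool))
    (π : Fin (k * a) → Fin (k * c)) (hπ : Function.Injective π) :
    ∑ s ∈ goodS k a, (fhatCoeff A (vmap π s)) ^ 2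
      = ∑ v : Fin (k * c) → Bool, (if predV v π then (fhatCoeff A v) ^ 2 else 0) := by
  rw [← Finset.sum_filter, ← image_vmap_goodS π hπ]
  rw [Finset.sum_image (fun s _ s' _ h => vmap_inj π hπ h)]

lemma predV_wt_mem {k c a : ℕ} (hk : 0 < k) (π : Fin (k * a) → Fin (k * c))
    (hπ : Function.Injective π) (v : Fin (k * c) → Bool) (h : predV v π) :
    wt v ∈ Finset.Icc 2 (k * a) := by
  obtain ⟨s, h1, h2, h3⟩ := h
  have hv : vmap π s = v := (vmap_count π hπ s v).1 h3
  have hgood : s ∈ goodS k a := by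
    simp only [goodS, Finset.mem_filter, Finset.mem_univ, true_and]
    exact ⟨h1, h2⟩
  have hwt : wt v = wt s := by rw [← hv, wt_vmap π hπ s]
  rw [Finset.mem_Icc, hwt]
  exact ⟨two_le_wt_goodS hk hgood, wt_le s⟩

/-- Lemma 6.4 of the paper: the Fourier-analytic bound on the expected squared total
variation distance of the posterior distribution from uniform, for distributions `D` on
`{−1,1}^k` with uniform marginals. -/
theorem advice_rmd_fourier_bound (k c a : ℕ) (hk : 0 < k) (hc : 0 < c) (ha : 0 < a)
    (α : ℝ) (hα0 : 0 < α) (hα1 : α < 1 / (100 * (k : ℝ)))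
    (hαn : (a : ℝ) = α * (k * c))
    (adv : Fin (k * c) → Fin k)
    (hadv : ∀ i : Fin k, (Finset.univ.filter fun j => adv j = i).card = c)
    (A : Finset (Fin (k * c) → Bool)) (hA : A.Nonempty)
    (D : (Fin k → Bool) → ℝ) (hD0 : ∀ b, 0 ≤ D b) (hD1 : ∑ b, D b = 1)
    (hmarg : ∀ j : Fin k, ∑ b : Fin k → Bool, D b * sgn (b j) = 0) :
    ((respMatchings k c a adv).card : ℝ)⁻¹ *
        ∑ π ∈ respMatchings k c a adv, (tvdToUnif (postDist A D π)) ^ 2 ≤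
      ((2 : ℝ) ^ (2 * (k * c)) / ((A.card : ℝ) ^ 2)) *
        ∑ ℓ ∈ Finset.Icc 2 (k * a), hprob k c a adv ℓ *
          ∑ v ∈ Finset.univ.filter fun v : Fin (k * c) → Bool => wt v = ℓ,
            (fhatCoeff A v) ^ 2 := by
  classical
  set R := respMatchings k c a adv with hRdef
  set C := ((2 : ℝ) ^ (2 * (k * c)) / ((A.card : ℝ) ^ 2)) with hCdef
  have hCnn : 0 ≤ C := by positivity
  have hRinv : (0:ℝ) ≤ ((R.card : ℝ))⁻¹ := by positivity
  have hinj : ∀ π ∈ R, Function.Injective π := by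
    intro π hπ
    rw [hRdef, respMatchings, Finset.mem_filter] at hπ
    exact hπ.2.1
  -- per-π bound, rewritten over v
  have hper : ∀ π ∈ R, (tvdToUnif (postDist A D π)) ^ 2 ≤
      C * ∑ v : Fin (k * c) → Bool, (if predV v π then (fhatCoeff A v) ^ 2 else 0) := by
    intro π hπ
    have := per_pi_bound hk A hA D hD0 hD1 hmarg π (hinj π hπ)
    rwa [sum_goodS_eq A π (hinj π hπ)] at this
  -- sum over π of the bound
  have hsum : ∑ π ∈ R, (C * ∑ v : Fin (k * c) → Bool,
        (if predV v π then (fhatCoeff A v) ^ 2 else 0))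
      = C * ∑ v : Fin (k * c) → Bool,
          (fhatCoeff A v) ^ 2 * (((R.filter fun π => predV v π)).card : ℝ) := by
    rw [← Finset.mul_sum]
    congr 1
    rw [Finset.sum_comm]
    refine Finset.sum_congr rfl fun v _ => ?_
    rw [← Finset.sum_filter, Finset.sum_const, nsmul_eq_mul]
    ring
  -- the v-sum split over weights
  have hsplit : ∑ v : Fin (k * c) → Bool,
        (fhatCoeff A v) ^ 2 * ((R.card : ℝ)⁻¹ * (((R.filter fun π => predV v π)).card : ℝ))
      = ∑ ℓ ∈ Finset.Icc 2 (k * a),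
          ∑ v ∈ Finset.univ.filter fun v : Fin (k * c) → Bool => wt v = ℓ,
            (fhatCoeff A v) ^ 2 *
              ((R.card : ℝ)⁻¹ * (((R.filter fun π => predV v π)).card : ℝ)) := by
    have hzero : ∀ v : Fin (k * c) → Bool, wt v ∉ Finset.Icc 2 (k * a) →
        ((R.filter fun π => predV v π)) = ∅ := by
      intro v hv
      rw [Finset.filter_eq_empty_iff]
      intro π hπ hcon
      exact hv (predV_wt_mem hk π (hinj π hπ) v hcon)
    rw [← Finset.sum_filter_add_sum_filter_not Finset.univ
      (fun v : Fin (k * c) → Bool => wt v ∈ Finset.Icc 2 (k * a))]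
    have hz2 : (∑ v ∈ Finset.univ.filter fun v : Fin (k * c) → Bool =>
          ¬ (wt v ∈ Finset.Icc 2 (k * a)),
        (fhatCoeff A v) ^ 2 *
          ((R.card : ℝ)⁻¹ * (((R.filter fun π => predV v π)).card : ℝ))) = 0 := by
      refine Finset.sum_eq_zero fun v hv => ?_
      simp only [Finset.mem_filter, Finset.mem_univ, true_and] at hv
      rw [hzero v hv, Finset.card_empty]
      norm_num
    rw [hz2, add_zero]
    rw [← Finset.sum_fiberwise_of_maps_to (g := fun v : Fin (k * c) → Bool => wt v)
      (t := Finset.Icc 2 (k * a))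
      (fun v hv => by simpa using (Finset.mem_filter.1 hv).2)]
    refine Finset.sum_congr rfl fun ℓ hℓ => ?_
    refine Finset.sum_congr ?_ fun v _ => rfl
    ext v
    simp only [Finset.mem_filter, Finset.mem_univ, true_and]
    constructor
    · rintro ⟨_, h⟩; exact h
    · intro h; exact ⟨h ▸ hℓ, h⟩
  -- chain
  calc (R.card : ℝ)⁻¹ * ∑ π ∈ R, (tvdToUnif (postDist A D π)) ^ 2
      ≤ (R.card : ℝ)⁻¹ * ∑ π ∈ R, (C * ∑ v : Fin (k * c) → Bool,
          (if predV v π then (fhatCoeff A v) ^ 2 else 0)) :=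
        mul_le_mul_of_nonneg_left (Finset.sum_le_sum hper) hRinv
    _ = C * ∑ v : Fin (k * c) → Bool,
          (fhatCoeff A v) ^ 2 *
            ((R.card : ℝ)⁻¹ * (((R.filter fun π => predV v π)).card : ℝ)) := by
        rw [hsum, Finset.mul_sum, Finset.mul_sum]
        rw [← Finset.mul_sum, ← Finset.mul_sum]
        rw [← mul_assoc, mul_comm ((R.card : ℝ)⁻¹) C, mul_assoc, Finset.mul_sum]
        congr 1
        refine Finset.sum_congr rfl fun v _ => by ring
    _ = C * ∑ ℓ ∈ Finset.Icc 2 (k * a),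
          ∑ v ∈ Finset.univ.filter fun v : Fin (k * c) → Bool => wt v = ℓ,
            (fhatCoeff A v) ^ 2 *
              ((R.card : ℝ)⁻¹ * (((R.filter fun π => predV v π)).card : ℝ)) := by
        rw [hsplit]
    _ ≤ C * ∑ ℓ ∈ Finset.Icc 2 (k * a),
          ∑ v ∈ Finset.univ.filter fun v : Fin (k * c) → Bool => wt v = ℓ,
            (fhatCoeff A v) ^ 2 * hprob k c a adv ℓ := by
        refine mul_le_mul_of_nonneg_left ?_ hCnn
        refine Finset.sum_le_sum fun ℓ _ => Finset.sum_le_sum fun v hv => ?_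
        simp only [Finset.mem_filter, Finset.mem_univ, true_and] at hv
        refine mul_le_mul_of_nonneg_left ?_ (sq_nonneg _)
        rw [← hv]
        exact hprob_ge adv v
    _ = C * ∑ ℓ ∈ Finset.Icc 2 (k * a), hprob k c a adv ℓ *
          ∑ v ∈ Finset.univ.filter fun v : Fin (k * c) → Bool => wt v = ℓ,
            (fhatCoeff A v) ^ 2 := by
        congr 1
        refine Finset.sum_congr rfl fun ℓ _ => ?_
        rw [Finset.mul_sum]
        refine Finset.sum_congr rfl fun v _ => by ring
end
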